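/- For a locally compact Hausdorff space X, the map t_X : X → Clust(RC(X), C), sending x to σ_x = {F ∈ RC(X) : x ∈ F}, is well-defined: for each x ∈ X, σ_x is a bounded cluster of the local contact algebra (RC(X), ρ_X, CR(X)). -/
import Mathlib


open Set

lemma aux_rc {X : Type*} [TopologicalSpace X]
    (K : Set X) : closure (interior (closure (interior K))) = closure (interior K) := by
  apply subset_antisymm
  · exact closure_minimal (interior_subset) isClosed_closure
  · exact closure_mono (subset_interior_iff.mpr ⟨interior K, isOpen_interior,
      Subset.rfl, subset_closure⟩)

lemma aux_bounded {X : Type*} [TopologicalSpace X] [LocallyCompactSpace X] [T2Space X]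
    (x : X) {U : Set X} (hU : IsOpen U) (hx : x ∈ U) :
    ∃ F : Set X, (closure (interior F) = F ∧ x ∈ F) ∧ IsCompact F ∧ F ⊆ U := by
  obtain ⟨K, hK, hxK, hKU⟩ := exists_compact_subset hU hx
  refine ⟨closure (interior K), ⟨aux_rc K, subset_closure hxK⟩, ?_, ?_⟩
  · exact hK.of_isClosed_subset isClosed_closure (closure_minimal interior_subset hK.isClosed)
  · exact (closure_minimal interior_subset hK.isClosed).trans hKU

/-- For a locally compact Hausdorff space X and x ∈ X, the set
σ_x = {F ∈ RC(X) : x ∈ F} is a bounded cluster of (RC(X), ρ_X, CR(X)),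
i.e. a cluster of (RC(X), C) meeting CR(X), where
F C G iff (F ∩ G ≠ ∅ or both F and G are non-compact). -/
theorem stmt_18 {X : Type*} [TopologicalSpace X] [LocallyCompactSpace X] [T2Space X]
    (x : X) :
    -- σ_x is nonempty
    ({F : Set X | closure (interior F) = F ∧ x ∈ F}.Nonempty) ∧
    -- (K1)
    (∀ F ∈ {F : Set X | closure (interior F) = F ∧ x ∈ F},
     ∀ G ∈ {F : Set X | closure (interior F) = F ∧ x ∈ F},
      F ∩ G ≠ ∅ ∨ (¬ IsCompact F ∧ ¬ IsCompact G)) ∧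
    -- (K2): the join in RC(X) is the union
    (∀ F G : Set X, closure (interior F) = F → closure (interior G) = G →
      F ∪ G ∈ {F : Set X | closure (interior F) = F ∧ x ∈ F} →
      F ∈ {F : Set X | closure (interior F) = F ∧ x ∈ F} ∨
      G ∈ {F : Set X | closure (interior F) = F ∧ x ∈ F}) ∧
    -- (K3)
    (∀ F : Set X, closure (interior F) = F →
      (∀ G ∈ {F : Set X | closure (interior F) = F ∧ x ∈ F},
        F ∩ G ≠ ∅ ∨ (¬ IsCompact F ∧ ¬ IsCompact G)) →
      F ∈ {F : Set X | closure (interior F) = F ∧ x ∈ F}) ∧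
    -- σ_x is bounded
    (∃ F : Set X, (closure (interior F) = F ∧ x ∈ F) ∧ IsCompact F) := by
  refine ⟨⟨univ, by simp⟩, ?_, ?_, ?_, ?_⟩
  · rintro F ⟨-, hxF⟩ G ⟨-, hxG⟩
    exact Or.inl (Nonempty.ne_empty ⟨x, hxF, hxG⟩)
  · rintro F G hF hG ⟨-, hx⟩
    rcases hx with h | h
    · exact Or.inl ⟨hF, h⟩
    · exact Or.inr ⟨hG, h⟩
  · intro F hF h
    refine ⟨hF, ?_⟩
    by_contra hxF
    have hU : IsOpen Fᶜ := by
      rw [← hF]; exact isClosed_closure.isOpen_compl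
    obtain ⟨G, ⟨hGrc, hxG⟩, hGcomp, hGsub⟩ := aux_bounded x hU hxF
    rcases h G ⟨hGrc, hxG⟩ with hne | ⟨-, hnc⟩
    · exact hne (eq_empty_iff_forall_notMem.mpr fun y ⟨hyF, hyG⟩ => hGsub hyG hyF)
    · exact hnc hGcomp
  · obtain ⟨F, hF, hFc, -⟩ := aux_bounded x isOpen_univ (mem_univ x)
    exact ⟨F, hF, hFc⟩
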